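/- Let g ≥ 1 be an integer and q > 1 a real number. Write P_g(x,y,z,q) = Σ_{(a,b,c) ∈ ℤ³} C_{a,b,c} x^a y^b z^c with uniquely determined real coefficients C_{a,b,c}, all but finitely many equal to zero. Then C_{1, g−1, g−1} ≠ 0, and every (a,b,c) ≠ (1, g−1, g−1) with C_{a,b,c} ≠ 0 satisfies 2a + b + c < 2g; that is, x y^{g−1} z^{g−1} is the unique monomial of maximal weight in P_g, where the weight of x^a y^b z^c is 2a + b + c. -/

import Mathlib

set_option maxHeartbeats 1000000

open Polynomial Finset

lemma sum_zpow_eq_zero {S : Finset ℤ} {f : ℤ → ℝ}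
    (h : ∀ s : ℝ, s ≠ 0 → ∑ k ∈ S, f k * s ^ k = 0) :
    ∀ k ∈ S, f k = 0 := by
  intro k0 hk0
  set N : ℕ := S.sup fun k => k.natAbs with hN
  have hnn : ∀ k ∈ S, 0 ≤ k + N := by
    intro k hk
    have h1 : k.natAbs ≤ N := Finset.le_sup (f := fun k : ℤ => k.natAbs) hk
    omega
  set P : Polynomial ℝ := ∑ k ∈ S, Polynomial.C (f k) * X ^ ((k + N).toNat) with hP
  have hPz : P = 0 := by
    apply Polynomial.eq_zero_of_infinite_isRoot
    apply Set.Infinite.mono (s := {x : ℝ | x ≠ 0})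
    · intro s hs
      have hs' : (s : ℝ) ≠ 0 := hs
      simp only [Set.mem_setOf_eq, IsRoot, hP, eval_finset_sum, eval_mul, eval_C, eval_pow, eval_X]
      have : ∀ k ∈ S, f k * s ^ (k + (N : ℤ)).toNat = f k * s ^ k * s ^ (N : ℕ) := by
        intro k hk
        rw [← zpow_natCast s, Int.toNat_of_nonneg (hnn k hk), mul_assoc, ← zpow_natCast s N,
          ← zpow_add₀ hs']
      rw [Finset.sum_congr rfl this, ← Finset.sum_mul, h s hs', zero_mul]
    · have : ({x : ℝ | x ≠ 0}) = ({0}ᶜ : Set ℝ) := by ext; simp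
      rw [this]
      exact Set.Finite.infinite_compl (Set.finite_singleton 0)
  have := congrArg (fun p => Polynomial.coeff p ((k0 + N).toNat)) hPz
  simp only [hP, finset_sum_coeff, coeff_C_mul, coeff_X_pow, coeff_zero] at this
  rw [Finset.sum_eq_single k0] at this
  · simpa using this
  · intro k hk hne
    have : ¬((k0 + (N : ℤ)).toNat = (k + (N : ℤ)).toNat) := by
      have := hnn k hk; have := hnn k0 hk0; omega
    simp [this]
  · intro h; exact absurd hk0 h

lemma sum_zpow2_eq_zero {S : Finset (ℤ × ℤ)} {f : ℤ × ℤ → ℝ}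
    (h : ∀ y z : ℝ, y ≠ 0 → z ≠ 0 → ∑ p ∈ S, f p * y ^ p.1 * z ^ p.2 = 0) :
    ∀ p ∈ S, f p = 0 := by
  have key : ∀ b : ℤ, ∀ z : ℝ, z ≠ 0 →
      ∑ p ∈ S.filter (fun p => p.1 = b), f p * z ^ p.2 = 0 := by
    intro b z hz
    have h1 : ∀ y : ℝ, y ≠ 0 →
        ∑ k ∈ S.image Prod.fst, (∑ p ∈ S.filter (fun p => p.1 = k), f p * z ^ p.2) * y ^ k = 0 := by
      intro y hy
      rw [← h y z hy hz]
      rw [Finset.sum_congr rfl (fun k _ => Finset.sum_mul ..)]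
      rw [← Finset.sum_fiberwise_of_maps_to (g := Prod.fst)
        (fun p hp => Finset.mem_image_of_mem Prod.fst hp) (fun p => f p * y ^ p.1 * z ^ p.2)]
      apply Finset.sum_congr rfl
      intro k _
      apply Finset.sum_congr rfl
      intro p hp
      have : p.1 = k := (Finset.mem_filter.mp hp).2
      rw [this]; ring
    by_cases hb : b ∈ S.image Prod.fst
    · exact sum_zpow_eq_zero h1 b hb
    · rw [Finset.filter_eq_empty_iff.mpr, Finset.sum_empty]
      intro p hp hpb
      exact hb (hpb ▸ Finset.mem_image_of_mem Prod.fst hp)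
  intro p hp
  have h2 : ∀ c ∈ (S.filter (fun r => r.1 = p.1)).image Prod.snd, f (p.1, c) = 0 := by
    apply sum_zpow_eq_zero (f := fun c => f (p.1, c))
    intro z hz
    rw [← key p.1 z hz]
    rw [Finset.sum_image]
    · apply Finset.sum_congr rfl
      intro r hr
      have : r.1 = p.1 := (Finset.mem_filter.mp hr).2
      rw [← this]
    · intro r hr r' hr' hrr
      have e1 : r.1 = p.1 := (Finset.mem_filter.mp hr).2
      have e2 : r'.1 = p.1 := (Finset.mem_filter.mp hr').2
      exact Prod.ext (e1.trans e2.symm) hrr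
  have : f (p.1, p.2) = 0 := h2 p.2 (Finset.mem_image_of_mem Prod.snd
    (Finset.mem_filter.mpr ⟨hp, rfl⟩))
  simpa using this

lemma sum_zpow3_eq_zero {S : Finset (ℤ × ℤ × ℤ)} {f : ℤ × ℤ × ℤ → ℝ}
    (h : ∀ x y z : ℝ, x ≠ 0 → y ≠ 0 → z ≠ 0 →
      ∑ p ∈ S, f p * x ^ p.1 * y ^ p.2.1 * z ^ p.2.2 = 0) :
    ∀ p ∈ S, f p = 0 := by
  have key : ∀ a : ℤ, ∀ y z : ℝ, y ≠ 0 → z ≠ 0 →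
      ∑ p ∈ S.filter (fun p => p.1 = a), f p * y ^ p.2.1 * z ^ p.2.2 = 0 := by
    intro a y z hy hz
    have h1 : ∀ x : ℝ, x ≠ 0 →
        ∑ k ∈ S.image Prod.fst,
          (∑ p ∈ S.filter (fun p => p.1 = k), f p * y ^ p.2.1 * z ^ p.2.2) * x ^ k = 0 := by
      intro x hx
      rw [← h x y z hx hy hz]
      rw [Finset.sum_congr rfl (fun k _ => Finset.sum_mul ..)]
      rw [← Finset.sum_fiberwise_of_maps_to (g := Prod.fst)
        (fun p hp => Finset.mem_image_of_mem Prod.fst hp) (fun p => f p * x ^ p.1 * y ^ p.2.1 * z ^ p.2.2)]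
      apply Finset.sum_congr rfl
      intro k _
      apply Finset.sum_congr rfl
      intro p hp
      have : p.1 = k := (Finset.mem_filter.mp hp).2
      rw [this]; ring
    by_cases hb : a ∈ S.image Prod.fst
    · exact sum_zpow_eq_zero h1 a hb
    · rw [Finset.filter_eq_empty_iff.mpr, Finset.sum_empty]
      intro p hp hpb
      exact hb (hpb ▸ Finset.mem_image_of_mem Prod.fst hp)
  intro p hp
  have h2 : ∀ r ∈ (S.filter (fun r => r.1 = p.1)).image Prod.snd, f (p.1, r) = 0 := by
    apply sum_zpow2_eq_zero (f := fun r => f (p.1, r))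
    intro y z hy hz
    rw [← key p.1 y z hy hz]
    rw [Finset.sum_image]
    · apply Finset.sum_congr rfl
      intro r hr
      have : r.1 = p.1 := (Finset.mem_filter.mp hr).2
      rw [← this]
    · intro r hr r' hr' hrr
      have e1 : r.1 = p.1 := (Finset.mem_filter.mp hr).2
      have e2 : r'.1 = p.1 := (Finset.mem_filter.mp hr').2
      exact Prod.ext (e1.trans e2.symm) hrr
  have : f (p.1, p.2) = 0 := h2 p.2 (Finset.mem_image_of_mem Prod.snd
    (Finset.mem_filter.mpr ⟨hp, rfl⟩))
  simpa using this




/-- The `q`-integer `[m]_q = 1 + q + ⋯ + q^{m-1}`. -/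
noncomputable def qInt (q : ℝ) (m : ℕ) : ℝ := ∑ i ∈ Finset.range m, q ^ i

/-- The `q`-factorial `[m]!_q = [1]_q [2]_q ⋯ [m]_q`. -/
noncomputable def qFact (q : ℝ) (m : ℕ) : ℝ := ∏ i ∈ Finset.range m, qInt q (i + 1)

/-- The Laurent polynomial `P_g(x, y, z, q)` of display (5.1). -/
noncomputable def Pg (g : ℕ) (x y z q : ℝ) : ℝ :=
  (-1 : ℝ) ^ g * q ^ (-(g : ℤ)) *
      (y ^ (-(g : ℤ)) * z ^ (g : ℤ) * ∏ i ∈ Finset.Icc 1 g, (y * q ^ i - 1) +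
        y ^ (g : ℤ) * z ^ (-(g : ℤ)) * ∏ i ∈ Finset.Icc 1 g, (z * q ^ i - 1)) +
    ∑ t ∈ Finset.range g, ∑ u ∈ Finset.range g,
      if t + u ≤ g then
        (-1 : ℝ) ^ (t + u) * (qFact q g / (qFact q t * qFact q u * qFact q (g - t - u))) *
          y ^ ((u : ℤ) - t) * z ^ ((t : ℤ) - u) * q ^ ((t * u : ℤ) - t - u) *
          (x - y * q ^ t - z * q ^ u + 1) *
          (∏ i ∈ Finset.Icc 1 (g - t - 1), (z * q ^ i - 1)) *
          (∏ i ∈ Finset.Icc 1 (g - u - 1), (y * q ^ i - 1))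
      else 0

lemma qFact_pos {q : ℝ} (hq : 1 < q) (m : ℕ) : 0 < qFact q m := by
  apply Finset.prod_pos
  intro i _
  apply Finset.sum_pos
  · intro j _; positivity
  · exact Finset.nonempty_range_iff.mpr (Nat.succ_ne_zero i)

noncomputable def Lterm (g : ℕ) (x y z q : ℝ) (t u : ℕ) : Polynomial ℝ :=
  if t + u ≤ g then
    Polynomial.C ((-1 : ℝ) ^ (t + u) * (qFact q g / (qFact q t * qFact q u * qFact q (g - t - u))) *
        y ^ ((u : ℤ) - t) * z ^ ((t : ℤ) - u) * q ^ ((t * u : ℤ) - t - u)) *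
      (Polynomial.C x * Polynomial.X ^ 2 - Polynomial.C (y * q ^ t) * Polynomial.X -
          Polynomial.C (z * q ^ u) * Polynomial.X + 1) *
      (∏ i ∈ Finset.Icc 1 (g - t - 1), (Polynomial.C (z * q ^ i) * Polynomial.X - 1)) *
      (∏ i ∈ Finset.Icc 1 (g - u - 1), (Polynomial.C (y * q ^ i) * Polynomial.X - 1))
  else 0

noncomputable def Lpoly (g : ℕ) (x y z q : ℝ) : Polynomial ℝ :=
  Polynomial.C ((-1 : ℝ) ^ g * q ^ (-(g : ℤ))) *
    (Polynomial.C (y ^ (-(g : ℤ)) * z ^ (g : ℤ)) *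
        ∏ i ∈ Finset.Icc 1 g, (Polynomial.C (y * q ^ i) * Polynomial.X - 1) +
      Polynomial.C (y ^ (g : ℤ) * z ^ (-(g : ℤ))) *
        ∏ i ∈ Finset.Icc 1 g, (Polynomial.C (z * q ^ i) * Polynomial.X - 1)) +
  ∑ t ∈ Finset.range g, ∑ u ∈ Finset.range g, Lterm g x y z q t u

lemma eval_Lpoly (g : ℕ) (x y z q s : ℝ) (hs : s ≠ 0) :
    (Lpoly g x y z q).eval s = Pg g (s ^ 2 * x) (s * y) (s * z) q := by
  simp only [Lpoly, Lterm, Pg, Polynomial.eval_add, Polynomial.eval_mul, Polynomial.eval_C,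
    Polynomial.eval_finset_sum, Polynomial.eval_prod, Polynomial.eval_sub, Polynomial.eval_X,
    Polynomial.eval_one, Polynomial.eval_pow, apply_ite (Polynomial.eval s), Polynomial.eval_zero]
  congr 1
  · congr 1
    congr 1
    · rw [mul_zpow, mul_zpow]
      have h1 : s ^ (-(g:ℤ)) * y ^ (-(g:ℤ)) * (s ^ (g:ℤ) * z ^ (g:ℤ)) =
          (s ^ (-(g:ℤ)) * s ^ (g:ℤ)) * (y ^ (-(g:ℤ)) * z ^ (g:ℤ)) := by ring
      rw [h1, ← zpow_add₀ hs, neg_add_cancel, zpow_zero, one_mul,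
        show (∏ i ∈ Finset.Icc 1 g, (y * q ^ i * s - 1)) =
          ∏ i ∈ Finset.Icc 1 g, (s * y * q ^ i - 1) from
          Finset.prod_congr rfl fun i _ => by ring]
    · rw [mul_zpow, mul_zpow]
      have h1 : s ^ (g:ℤ) * y ^ (g:ℤ) * (s ^ (-(g:ℤ)) * z ^ (-(g:ℤ))) =
          (s ^ (g:ℤ) * s ^ (-(g:ℤ))) * (y ^ (g:ℤ) * z ^ (-(g:ℤ))) := by ring
      rw [h1, ← zpow_add₀ hs, add_neg_cancel, zpow_zero, one_mul,
        show (∏ i ∈ Finset.Icc 1 g, (z * q ^ i * s - 1)) =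
          ∏ i ∈ Finset.Icc 1 g, (s * z * q ^ i - 1) from
          Finset.prod_congr rfl fun i _ => by ring]
  · apply Finset.sum_congr rfl
    intro t _
    apply Finset.sum_congr rfl
    intro u _
    split
    · rw [mul_zpow, mul_zpow]
      have hss : s ^ ((u:ℤ) - t) * s ^ ((t:ℤ) - u) = 1 := by
        rw [← zpow_add₀ hs]; norm_num
      have hq1 : (∏ i ∈ Finset.Icc 1 (g - t - 1), (z * q ^ i * s - 1)) =
          ∏ i ∈ Finset.Icc 1 (g - t - 1), (s * z * q ^ i - 1) :=
        Finset.prod_congr rfl fun i _ => by ring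
      have hq2 : (∏ i ∈ Finset.Icc 1 (g - u - 1), (y * q ^ i * s - 1)) =
          ∏ i ∈ Finset.Icc 1 (g - u - 1), (s * y * q ^ i - 1) :=
        Finset.prod_congr rfl fun i _ => by ring
      rw [hq1, hq2]
      have hx : x * s ^ 2 - y * q ^ t * s - z * q ^ u * s + 1 =
          s ^ 2 * x - s * y * q ^ t - s * z * q ^ u + 1 := by ring
      rw [hx]
      linear_combination (-((-1:ℝ)^(t+u) * (qFact q g / (qFact q t * qFact q u * qFact q (g-t-u))) *
        y ^ ((u:ℤ)-t) * z ^ ((t:ℤ)-u) * q ^ ((t*u:ℤ)-t-u) *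
        (s^2*x - s*y*q^t - s*z*q^u + 1) *
        (∏ i ∈ Finset.Icc 1 (g-t-1), (s*z*q^i - 1)) *
        (∏ i ∈ Finset.Icc 1 (g-u-1), (s*y*q^i - 1)))) * hss
    · rfl

lemma natDegree_linfac (a : ℝ) :
    (Polynomial.C a * Polynomial.X - 1 : Polynomial ℝ).natDegree ≤ 1 := by
  apply le_trans (Polynomial.natDegree_sub_le _ _)
  apply max_le
  · exact le_trans (Polynomial.natDegree_C_mul_le _ _) (by simp)
  · simp

lemma natDegree_linprod {s : Finset ℕ} {a : ℕ → ℝ} :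
    (∏ i ∈ s, (Polynomial.C (a i) * Polynomial.X - 1)).natDegree ≤ s.card := by
  apply le_trans (Polynomial.natDegree_prod_le _ _)
  rw [Finset.card_eq_sum_ones]
  exact Finset.sum_le_sum fun i _ => natDegree_linfac (a i)

lemma coeff_linprod_top {s : Finset ℕ} {a : ℕ → ℝ} :
    (∏ i ∈ s, (Polynomial.C (a i) * Polynomial.X - 1)).coeff s.card = ∏ i ∈ s, a i := by
  induction s using Finset.cons_induction with
  | empty => simp
  | cons i s hi ih =>
    rw [Finset.prod_cons, Finset.card_cons, Finset.prod_cons]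
    have : s.card + 1 = 1 + s.card := by omega
    rw [this, Polynomial.coeff_mul_add_eq_of_natDegree_le (natDegree_linfac (a i)) natDegree_linprod, ih]
    have hc : (Polynomial.C (a i) * Polynomial.X - 1 : Polynomial ℝ).coeff 1 = a i := by
      simp [Polynomial.coeff_sub, Polynomial.coeff_C_mul, Polynomial.coeff_one]
    rw [hc]

lemma quad_natDegree_le (x b c : ℝ) :
    (Polynomial.C x * Polynomial.X ^ 2 - Polynomial.C b * Polynomial.X -
      Polynomial.C c * Polynomial.X + 1 : Polynomial ℝ).natDegree ≤ 2 := by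
  apply le_trans (Polynomial.natDegree_add_le _ _)
  apply max_le
  · apply le_trans (Polynomial.natDegree_sub_le _ _)
    apply max_le
    · apply le_trans (Polynomial.natDegree_sub_le _ _)
      apply max_le
      · exact le_trans (Polynomial.natDegree_C_mul_le _ _) (by simp [Polynomial.natDegree_X_pow])
      · exact le_trans (Polynomial.natDegree_C_mul_le _ _) (by simp)
    · exact le_trans (Polynomial.natDegree_C_mul_le _ _) (by simp)
  · simp

lemma quad_coeff_two (x b c : ℝ) :
    (Polynomial.C x * Polynomial.X ^ 2 - Polynomial.C b * Polynomial.X -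
      Polynomial.C c * Polynomial.X + 1 : Polynomial ℝ).coeff 2 = x := by
  simp [Polynomial.coeff_sub, Polynomial.coeff_add, Polynomial.coeff_C_mul,
    Polynomial.coeff_X_pow, Polynomial.coeff_X, Polynomial.coeff_one]

lemma natDegree_Lterm_le (g : ℕ) (x y z q : ℝ) (t u : ℕ) :
    (Lterm g x y z q t u).natDegree ≤ 2 + (g - t - 1) + (g - u - 1) := by
  rw [Lterm]
  split
  · apply le_trans (Polynomial.natDegree_mul_le)
    apply add_le_add
    · apply le_trans (Polynomial.natDegree_mul_le)
      apply add_le_add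
      · apply le_trans (Polynomial.natDegree_mul_le)
        simp only [Polynomial.natDegree_C, zero_add]
        exact quad_natDegree_le x (y * q ^ t) (z * q ^ u)
      · exact le_trans natDegree_linprod (by simp)
    · exact le_trans natDegree_linprod (by simp)
  · simp

lemma coeff_Lterm_ne (g : ℕ) (hg : 1 ≤ g) (x y z q : ℝ) (t u : ℕ) (ht : t < g) (hu : u < g)
    (htu : ¬(t = 0 ∧ u = 0)) : (Lterm g x y z q t u).coeff (2 * g) = 0 := by
  apply Polynomial.coeff_eq_zero_of_natDegree_lt
  refine lt_of_le_of_lt (natDegree_Lterm_le g x y z q t u) ?_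
  omega

lemma coeff_Lterm_00 (g : ℕ) (hg : 1 ≤ g) (x y z q : ℝ) (hq : 1 < q) :
    (Lterm g x y z q 0 0).coeff (2 * g) =
      x * (∏ i ∈ Finset.Icc 1 (g - 1), (z * q ^ i)) * (∏ i ∈ Finset.Icc 1 (g - 1), (y * q ^ i)) := by
  rw [Lterm, if_pos (by omega)]
  have e2g : 2 * g = (2 + (g - 0 - 1)) + (g - 0 - 1) := by omega
  rw [e2g]
  rw [Polynomial.coeff_mul_add_eq_of_natDegree_le
    (by apply le_trans (Polynomial.natDegree_mul_le)
        apply add_le_add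
        · apply le_trans (Polynomial.natDegree_mul_le)
          simp only [Polynomial.natDegree_C, zero_add]
          exact quad_natDegree_le x (y * q ^ 0) (z * q ^ 0)
        · exact le_trans natDegree_linprod (by simp))
    (le_trans natDegree_linprod (by simp))]
  rw [Polynomial.coeff_mul_add_eq_of_natDegree_le
    (by apply le_trans (Polynomial.natDegree_mul_le)
        simp only [Polynomial.natDegree_C, zero_add]
        exact quad_natDegree_le x (y * q ^ 0) (z * q ^ 0))
    (le_trans natDegree_linprod (by simp))]
  have hcard : ∀ w : ℝ, (∏ i ∈ Finset.Icc 1 (g - 0 - 1),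
      (Polynomial.C (w * q ^ i) * Polynomial.X - 1)).coeff (g - 0 - 1)
      = ∏ i ∈ Finset.Icc 1 (g - 1), (w * q ^ i) := by
    intro w
    have h := coeff_linprod_top (s := Finset.Icc 1 (g - 0 - 1)) (a := fun i => w * q ^ i)
    rw [show (Finset.Icc 1 (g - 0 - 1)).card = g - 0 - 1 from by simp] at h
    simpa using h
  rw [hcard, hcard]
  rw [Polynomial.coeff_C_mul, quad_coeff_two]
  have hfact : (qFact q g / (qFact q 0 * qFact q 0 * qFact q (g - 0 - 0))) = 1 := by
    have h0 : qFact q 0 = 1 := by simp [qFact]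
    have hgpos := qFact_pos hq g
    simp only [Nat.sub_zero, h0, one_mul]
    exact div_self (ne_of_gt hgpos)
  simp only [Nat.sub_zero] at hfact ⊢
  rw [hfact]
  push_cast
  simp only [pow_zero, mul_zero, zero_sub, zpow_zero]
  ring

lemma natDegree_Lpoly_le (g : ℕ) (hg : 1 ≤ g) (x y z q : ℝ) :
    (Lpoly g x y z q).natDegree ≤ 2 * g := by
  apply le_trans (Polynomial.natDegree_add_le _ _)
  apply max_le
  · apply le_trans (Polynomial.natDegree_mul_le)
    simp only [Polynomial.natDegree_C, zero_add]
    apply le_trans (Polynomial.natDegree_add_le _ _)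
    apply max_le <;>
    · apply le_trans (Polynomial.natDegree_mul_le)
      simp only [Polynomial.natDegree_C, zero_add]
      refine le_trans natDegree_linprod ?_
      simp
      omega
  · apply le_trans (Polynomial.natDegree_sum_le _ _)
    rw [Finset.fold_max_le]
    refine ⟨by omega, fun t ht => ?_⟩
    apply le_trans (Polynomial.natDegree_sum_le _ _)
    rw [Finset.fold_max_le]
    refine ⟨by omega, fun u hu => ?_⟩
    simp only [Function.comp]
    refine le_trans (natDegree_Lterm_le g x y z q t u) ?_
    simp only [Finset.mem_range] at ht hu
    omega

lemma coeff_Lpoly_top (g : ℕ) (hg : 1 ≤ g) (x y z q : ℝ) (hq : 1 < q) :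
    (Lpoly g x y z q).coeff (2 * g) =
      x * (∏ i ∈ Finset.Icc 1 (g - 1), (z * q ^ i)) * (∏ i ∈ Finset.Icc 1 (g - 1), (y * q ^ i)) := by
  rw [Lpoly, Polynomial.coeff_add]
  have h1 : (Polynomial.C ((-1 : ℝ) ^ g * q ^ (-(g : ℤ))) *
      (Polynomial.C (y ^ (-(g : ℤ)) * z ^ (g : ℤ)) *
        ∏ i ∈ Finset.Icc 1 g, (Polynomial.C (y * q ^ i) * Polynomial.X - 1) +
      Polynomial.C (y ^ (g : ℤ) * z ^ (-(g : ℤ))) *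
        ∏ i ∈ Finset.Icc 1 g, (Polynomial.C (z * q ^ i) * Polynomial.X - 1))).coeff (2 * g) = 0 := by
    apply Polynomial.coeff_eq_zero_of_natDegree_lt
    have h2 : ∀ w' : ℝ, ∀ a : ℕ → ℝ, (Polynomial.C (w' : ℝ) *
        ∏ i ∈ Finset.Icc 1 g, (Polynomial.C (a i) * Polynomial.X - 1)).natDegree ≤ g := by
      intro w' a
      apply le_trans (Polynomial.natDegree_mul_le)
      simp only [Polynomial.natDegree_C, zero_add]
      refine le_trans natDegree_linprod (by simp)
    calc _ ≤ _ := Polynomial.natDegree_mul_le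
    _ < 2 * g := by
      simp only [Polynomial.natDegree_C, zero_add]
      have := Polynomial.natDegree_add_le
        (Polynomial.C (y ^ (-(g : ℤ)) * z ^ (g : ℤ)) *
          ∏ i ∈ Finset.Icc 1 g, (Polynomial.C (y * q ^ i) * Polynomial.X - 1))
        (Polynomial.C (y ^ (g : ℤ) * z ^ (-(g : ℤ))) *
          ∏ i ∈ Finset.Icc 1 g, (Polynomial.C (z * q ^ i) * Polynomial.X - 1))
      have ha := h2 (y ^ (-(g : ℤ)) * z ^ (g : ℤ)) (fun i => y * q ^ i)
      have hb := h2 (y ^ (g : ℤ) * z ^ (-(g : ℤ))) (fun i => z * q ^ i)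
      omega
  rw [h1, zero_add, Polynomial.finset_sum_coeff]
  rw [Finset.sum_eq_single 0]
  · rw [Polynomial.finset_sum_coeff, Finset.sum_eq_single 0]
    · exact coeff_Lterm_00 g hg x y z q hq
    · intro u hu hu0
      exact coeff_Lterm_ne g hg x y z q 0 u hg (Finset.mem_range.mp hu) (by omega)
    · intro h0; simp at h0; omega
  · intro t ht ht0
    rw [Polynomial.finset_sum_coeff]
    apply Finset.sum_eq_zero
    intro u hu
    exact coeff_Lterm_ne g hg x y z q t u (Finset.mem_range.mp ht) (Finset.mem_range.mp hu) (by omega)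
  · intro h0; simp at h0; omega

/-- Proposition 5.5: `x y^{g-1} z^{g-1}` is the unique monomial of maximal weight in the
Laurent polynomial `P_g`, where the weight of `x^a y^b z^c` is `2a + b + c`: for any
finitely supported family of Laurent coefficients representing `P_g`, the coefficient of
`(1, g−1, g−1)` is nonzero and every other monomial with nonzero coefficient has weight
less than `2g`. -/
theorem Pg_unique_max_weight_monomial
    (g : ℕ) (hg : 1 ≤ g) (q : ℝ) (hq : 1 < q) (C : (ℤ × ℤ × ℤ) →₀ ℝ)
    (hC : ∀ x y z : ℝ, x ≠ 0 → y ≠ 0 → z ≠ 0 →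
      Pg g x y z q = ∑ p ∈ C.support, C p * x ^ p.1 * y ^ p.2.1 * z ^ p.2.2) :
    C (1, (g : ℤ) - 1, (g : ℤ) - 1) ≠ 0 ∧
      ∀ p : ℤ × ℤ × ℤ, p ≠ (1, (g : ℤ) - 1, (g : ℤ) - 1) → C p ≠ 0 →
        2 * p.1 + p.2.1 + p.2.2 < 2 * (g : ℤ) := by
  have hq0 : (0 : ℝ) < q := lt_trans one_pos hq
  set W : ℤ × ℤ × ℤ → ℤ := fun p => 2 * p.1 + p.2.1 + p.2.2 with hW
  set p₀ : ℤ × ℤ × ℤ := (1, (g : ℤ) - 1, (g : ℤ) - 1) with hp₀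
  set Kq : ℝ := (∏ i ∈ Finset.Icc 1 (g - 1), q ^ i) ^ 2 with hKq
  have hKqpos : 0 < Kq := by
    rw [hKq]
    apply pow_pos
    exact Finset.prod_pos fun i _ => pow_pos hq0 i
  have hWp₀ : W p₀ = 2 * (g : ℤ) := by
    rw [hW, hp₀]
    simp only
    push_cast
    ring
  have hconv : ∀ x y z : ℝ,
      x * (∏ i ∈ Finset.Icc 1 (g - 1), (z * q ^ i)) * (∏ i ∈ Finset.Icc 1 (g - 1), (y * q ^ i))
        = Kq * (x ^ (1 : ℤ) * y ^ ((g : ℤ) - 1) * z ^ ((g : ℤ) - 1)) := by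
    intro x y z
    rw [Finset.prod_mul_distrib, Finset.prod_mul_distrib, Finset.prod_const, Finset.prod_const]
    have hcard : (Finset.Icc 1 (g - 1)).card = g - 1 := by simp
    have hcast : ((g - 1 : ℕ) : ℤ) = (g : ℤ) - 1 := by omega
    rw [hcard, zpow_one, ← hcast, zpow_natCast, zpow_natCast, hKq]
    ring
  have stage1 : ∀ x y z : ℝ, x ≠ 0 → y ≠ 0 → z ≠ 0 →
      ∑ p ∈ C.support.filter (fun p => 2 * (g : ℤ) ≤ W p),
          C p * x ^ p.1 * y ^ p.2.1 * z ^ p.2.2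
        = Kq * (x ^ (1 : ℤ) * y ^ ((g : ℤ) - 1) * z ^ ((g : ℤ) - 1)) := by
    intro x y z hx hy hz
    set T : Finset ℤ :=
      C.support.image W ∪ (Finset.range (2 * g + 1)).image (fun n : ℕ => (n : ℤ)) with hT
    set σ : ℤ → ℝ := fun k =>
      ∑ p ∈ C.support.filter (fun p => W p = k), C p * x ^ p.1 * y ^ p.2.1 * z ^ p.2.2 with hσ
    set G : ℤ → ℝ := fun k =>
      if 0 ≤ k ∧ k ≤ 2 * (g : ℤ) then (Lpoly g x y z q).coeff k.toNat else 0 with hG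
    have hTP : T.filter (fun k => 0 ≤ k ∧ k ≤ 2 * (g : ℤ))
        = (Finset.range (2 * g + 1)).image (fun n : ℕ => (n : ℤ)) := by
      ext k
      simp only [Finset.mem_filter, Finset.mem_image, Finset.mem_range, hT, Finset.mem_union]
      constructor
      · rintro ⟨-, h0, h2g⟩
        exact ⟨k.toNat, by omega, by omega⟩
      · rintro ⟨n, hn, rfl⟩
        exact ⟨Or.inr ⟨n, hn, rfl⟩, by omega, by omega⟩
    have h2gT : (2 * (g : ℤ)) ∈ T := by
      rw [hT]
      apply Finset.mem_union_right
      exact Finset.mem_image.mpr ⟨2 * g, Finset.mem_range.mpr (by omega), by push_cast; ring⟩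
    have key : ∀ k ∈ T, σ k - G k = 0 := by
      apply sum_zpow_eq_zero (f := fun k => σ k - G k)
      intro s hs
      have e1 : ∑ k ∈ T, σ k * s ^ k
          = ∑ p ∈ C.support, C p * x ^ p.1 * y ^ p.2.1 * z ^ p.2.2 * s ^ (W p) := by
        rw [← Finset.sum_fiberwise_of_maps_to (g := W)
          (fun p hp => Finset.mem_union_left _ (Finset.mem_image_of_mem W hp))
          (fun p => C p * x ^ p.1 * y ^ p.2.1 * z ^ p.2.2 * s ^ (W p))]
        apply Finset.sum_congr rfl
        intro k _
        rw [hσ]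
        simp only
        rw [Finset.sum_mul]
        apply Finset.sum_congr rfl
        intro p hp
        rw [(Finset.mem_filter.mp hp).2]
      have e2 : ∑ k ∈ T, G k * s ^ k = (Lpoly g x y z q).eval s := by
        have hGk : ∀ k, G k * s ^ k =
            if 0 ≤ k ∧ k ≤ 2 * (g : ℤ) then (Lpoly g x y z q).coeff k.toNat * s ^ k else 0 := by
          intro k
          rw [hG]
          simp only
          split_ifs <;> simp
        rw [Finset.sum_congr rfl fun k _ => hGk k, ← Finset.sum_filter, hTP,
          Finset.sum_image (fun a _ b _ h => by exact_mod_cast h)]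
        rw [Polynomial.eval_eq_sum_range' (n := 2 * g + 1)
          (lt_of_le_of_lt (natDegree_Lpoly_le g hg x y z q) (by omega)) s]
        apply Finset.sum_congr rfl
        intro n hn
        rw [Int.toNat_natCast, zpow_natCast]
      have e3 : (Lpoly g x y z q).eval s
          = ∑ p ∈ C.support, C p * x ^ p.1 * y ^ p.2.1 * z ^ p.2.2 * s ^ (W p) := by
        rw [eval_Lpoly g x y z q s hs,
          hC (s ^ 2 * x) (s * y) (s * z) (mul_ne_zero (pow_ne_zero 2 hs) hx)
            (mul_ne_zero hs hy) (mul_ne_zero hs hz)]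
        apply Finset.sum_congr rfl
        intro p _
        have h2 : (s ^ 2 * x) ^ p.1 = s ^ (2 * p.1) * x ^ p.1 := by
          rw [mul_zpow, ← zpow_natCast s 2, ← zpow_mul]
          norm_num
        have hwp : s ^ (W p) = s ^ (2 * p.1) * s ^ p.2.1 * s ^ p.2.2 := by
          rw [hW]
          simp only
          rw [← zpow_add₀ hs, ← zpow_add₀ hs]
        rw [h2, mul_zpow, mul_zpow, hwp]
        ring
      calc ∑ k ∈ T, (σ k - G k) * s ^ k
          = ∑ k ∈ T, (σ k * s ^ k - G k * s ^ k) :=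
            Finset.sum_congr rfl fun k _ => sub_mul _ _ _
        _ = ∑ k ∈ T, σ k * s ^ k - ∑ k ∈ T, G k * s ^ k := Finset.sum_sub_distrib _ _
        _ = 0 := by rw [e1, e2, e3, sub_self]
    have hσval : ∀ k ∈ T.filter (fun k => 2 * (g : ℤ) ≤ k),
        σ k = if k = 2 * (g : ℤ) then
          Kq * (x ^ (1 : ℤ) * y ^ ((g : ℤ) - 1) * z ^ ((g : ℤ) - 1)) else 0 := by
      intro k hk
      obtain ⟨hkT, hk2g⟩ := Finset.mem_filter.mp hk
      have h0 : σ k = G k := sub_eq_zero.mp (key k hkT)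
      rcases eq_or_lt_of_le hk2g with heq | hgt
      · rw [if_pos heq.symm, h0, hG]
        simp only
        rw [if_pos (by omega), show k.toNat = 2 * g from by omega,
          coeff_Lpoly_top g hg x y z q hq, hconv]
      · rw [if_neg (by omega), h0, hG]
        simp only
        rw [if_neg (by omega)]
    have hfib2 : ∑ p ∈ C.support.filter (fun p => 2 * (g : ℤ) ≤ W p),
        C p * x ^ p.1 * y ^ p.2.1 * z ^ p.2.2
        = ∑ k ∈ T.filter (fun k => 2 * (g : ℤ) ≤ k), σ k := by
      rw [← Finset.sum_fiberwise_of_maps_to (g := W)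
        (fun p hp => Finset.mem_filter.mpr
          ⟨Finset.mem_union_left _ (Finset.mem_image_of_mem W (Finset.mem_filter.mp hp).1),
            (Finset.mem_filter.mp hp).2⟩)
        (fun p => C p * x ^ p.1 * y ^ p.2.1 * z ^ p.2.2)]
      apply Finset.sum_congr rfl
      intro k hk
      have hk2g : 2 * (g : ℤ) ≤ k := (Finset.mem_filter.mp hk).2
      rw [hσ]
      rw [Finset.filter_filter]
      apply Finset.sum_congr _ fun _ _ => rfl
      apply Finset.filter_congr
      intro p _
      constructor
      · exact fun h => h.2
      · exact fun h => ⟨by omega, h⟩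
    rw [hfib2, Finset.sum_congr rfl hσval, Finset.sum_ite_eq',
      if_pos (Finset.mem_filter.mpr ⟨h2gT, le_refl _⟩)]
  -- stage 2
  set S : Finset (ℤ × ℤ × ℤ) := C.support.filter (fun p => 2 * (g : ℤ) ≤ W p) ∪ {p₀} with hS
  have hp₀S : p₀ ∈ S := Finset.mem_union_right _ (Finset.mem_singleton_self p₀)
  have main : ∀ p ∈ S,
      (if 2 * (g : ℤ) ≤ W p then C p else 0) - (if p = p₀ then Kq else 0) = 0 := by
    apply sum_zpow3_eq_zero
      (f := fun p => (if 2 * (g : ℤ) ≤ W p then C p else 0) - (if p = p₀ then Kq else 0))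
    intro x y z hx hy hz
    have e1 : ∑ p ∈ S, (if 2 * (g : ℤ) ≤ W p then C p else 0) * x ^ p.1 * y ^ p.2.1 * z ^ p.2.2
        = Kq * (x ^ (1 : ℤ) * y ^ ((g : ℤ) - 1) * z ^ ((g : ℤ) - 1)) := by
      rw [← stage1 x y z hx hy hz]
      have hsub : C.support.filter (fun p => 2 * (g : ℤ) ≤ W p) ⊆ S :=
        Finset.subset_union_left
      rw [Finset.sum_congr rfl (fun p _ => by rw [ite_mul, ite_mul, ite_mul, zero_mul, zero_mul,
        zero_mul]), ← Finset.sum_filter]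
      apply (Finset.sum_subset _ _).symm
      · intro p hp
        rw [Finset.mem_filter]
        exact ⟨hsub hp, (Finset.mem_filter.mp hp).2⟩
      · intro p hpS hpn
        obtain ⟨hpS', hp2g⟩ := Finset.mem_filter.mp hpS
        have hp0 : p ∉ C.support := fun hmem => hpn (Finset.mem_filter.mpr ⟨hmem, hp2g⟩)
        rw [Finsupp.notMem_support_iff.mp hp0]
        ring
    have e2 : ∑ p ∈ S, (if p = p₀ then Kq else 0) * x ^ p.1 * y ^ p.2.1 * z ^ p.2.2
        = Kq * (x ^ (1 : ℤ) * y ^ ((g : ℤ) - 1) * z ^ ((g : ℤ) - 1)) := by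
      rw [Finset.sum_congr rfl (fun p _ => by
        rw [ite_mul, ite_mul, ite_mul, zero_mul, zero_mul, zero_mul]),
        Finset.sum_ite_eq', if_pos hp₀S]
      rw [hp₀]
      ring
    calc ∑ p ∈ S, ((if 2 * (g : ℤ) ≤ W p then C p else 0) - (if p = p₀ then Kq else 0)) *
          x ^ p.1 * y ^ p.2.1 * z ^ p.2.2
        = ∑ p ∈ S, ((if 2 * (g : ℤ) ≤ W p then C p else 0) * x ^ p.1 * y ^ p.2.1 * z ^ p.2.2 -
            (if p = p₀ then Kq else 0) * x ^ p.1 * y ^ p.2.1 * z ^ p.2.2) :=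
          Finset.sum_congr rfl fun p _ => by ring
      _ = 0 := by rw [Finset.sum_sub_distrib, e1, e2, sub_self]
  constructor
  · have h := main p₀ hp₀S
    rw [if_pos (le_of_eq hWp₀.symm), if_pos rfl, sub_eq_zero] at h
    rw [h]
    exact ne_of_gt hKqpos
  · intro p hne hCp
    by_contra hlt
    push_neg at hlt
    have hpS : p ∈ S := Finset.mem_union_left _
      (Finset.mem_filter.mpr ⟨Finsupp.mem_support_iff.mpr hCp, hlt⟩)
    have h := main p hpS
    rw [if_pos hlt, if_neg hne, sub_zero] at h
    exact hCp h
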